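/- Let ρ ↦ L_0(ρ) := γ·(E_{02} ρ E_{20} − (1/2)(E_{22} ρ + ρ E_{22})) be the ℂ-linear endomorphism of the space of 3×3 complex matrices, where γ is a real number and E_{ij} denotes the matrix unit with a 1 in row i, column j (indices 0,1,2). Then for all t ∈ ℝ and all 3×3 complex matrices ρ, the matrix exp(t L_0)(ρ) has entries: (exp(t L_0)ρ)_{00} = ρ_{00} + (1 − e^{−γ t}) ρ_{22}, (exp(t L_0)ρ)_{22} = e^{−γ t} ρ_{22}, (exp(t L_0)ρ)_{02} = e^{−γ t/2} ρ_{02}, (exp(t L_0)ρ)_{20} = e^{−γ t/2} ρ_{20}, (exp(t L_0)ρ)_{12} = e^{−γ t/2} ρ_{12}, (exp(t L_0)ρ)_{21} = e^{−γ t/2} ρ_{21}, and (exp(t L_0)ρ)_{01} = ρ_{01}, (exp(t L_0)ρ)_{10} = ρ_{10}, (exp(t L_0)ρ)_{11} = ρ_{11}. -/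

import Mathlib

attribute [local instance] Matrix.linftyOpNormedAddCommGroup Matrix.linftyOpNormedSpace

/-- The standard matrix unit `E_{ij}` (a `1` in row `i`, column `j`). -/
noncomputable def matUnit (i j : Fin 3) : Matrix (Fin 3) (Fin 3) ℂ :=
  Matrix.single i j 1

instance matCLMIsTopologicalRing :
    IsTopologicalRing (Matrix (Fin 3) (Fin 3) ℂ →L[ℂ] Matrix (Fin 3) (Fin 3) ℂ) := by
  exact @NonUnitalSeminormedRing.toIsTopologicalRing _
    ContinuousLinearMap.toNormedRing.toNonUnitalNormedRing.toNonUnitalSeminormedRing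

open Nat in
lemma exp_eigen {M : Type*} [NormedAddCommGroup M] [NormedSpace ℂ M] [CompleteSpace M]
    (A : M →L[ℂ] M) (c : ℂ) (v : M) (h : A v = c • v) :
    NormedSpace.exp A v = NormedSpace.exp c • v := by
  have hpow : ∀ n : ℕ, (A ^ n) v = c ^ n • v := by
    intro n
    induction n with
    | zero => simp
    | succ n ih =>
      rw [pow_succ, ContinuousLinearMap.mul_apply, h, map_smul, ih, smul_smul, pow_succ]
      ring_nf
  have hs : Summable fun n : ℕ => ((n ! : ℂ))⁻¹ • A ^ n :=
    NormedSpace.expSeries_summable' A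
  have hs' : Summable fun n : ℕ => ((n ! : ℂ))⁻¹ • c ^ n :=
    NormedSpace.expSeries_summable' c
  rw [NormedSpace.exp_eq_tsum (𝕂 := ℂ), NormedSpace.exp_eq_tsum (𝕂 := ℂ)]
  have := (ContinuousLinearMap.apply ℂ M v).map_tsum hs
  simp only [ContinuousLinearMap.apply_apply] at this
  rw [this]
  calc ∑' n : ℕ, (((n ! : ℂ))⁻¹ • A ^ n) v
      = ∑' n : ℕ, (((n ! : ℂ))⁻¹ • c ^ n) • v := by
        congr 1; funext n
        rw [ContinuousLinearMap.smul_apply, hpow, smul_smul, smul_eq_mul]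
    _ = (∑' n : ℕ, ((n ! : ℂ))⁻¹ • c ^ n) • v := by
        rw [← hs'.tsum_smul_const]

lemma aux_e00 (γ : ℝ) : (γ : ℂ) •
    (matUnit 0 2 * matUnit 0 0 * matUnit 2 0 -
      (1 / 2 : ℂ) • (matUnit 2 2 * matUnit 0 0 + matUnit 0 0 * matUnit 2 2)) =
    (0 : ℂ) • matUnit 0 0 := by
  ext a b
  fin_cases a <;> fin_cases b <;>
    simp [matUnit, Matrix.single, Matrix.mul_apply, Fin.sum_univ_three] <;> ring

lemma aux_e01 (γ : ℝ) : (γ : ℂ) •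
    (matUnit 0 2 * matUnit 0 1 * matUnit 2 0 -
      (1 / 2 : ℂ) • (matUnit 2 2 * matUnit 0 1 + matUnit 0 1 * matUnit 2 2)) =
    (0 : ℂ) • matUnit 0 1 := by
  ext a b
  fin_cases a <;> fin_cases b <;>
    simp [matUnit, Matrix.single, Matrix.mul_apply, Fin.sum_univ_three] <;> ring

lemma aux_e10 (γ : ℝ) : (γ : ℂ) •
    (matUnit 0 2 * matUnit 1 0 * matUnit 2 0 -
      (1 / 2 : ℂ) • (matUnit 2 2 * matUnit 1 0 + matUnit 1 0 * matUnit 2 2)) =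
    (0 : ℂ) • matUnit 1 0 := by
  ext a b
  fin_cases a <;> fin_cases b <;>
    simp [matUnit, Matrix.single, Matrix.mul_apply, Fin.sum_univ_three] <;> ring

lemma aux_e11 (γ : ℝ) : (γ : ℂ) •
    (matUnit 0 2 * matUnit 1 1 * matUnit 2 0 -
      (1 / 2 : ℂ) • (matUnit 2 2 * matUnit 1 1 + matUnit 1 1 * matUnit 2 2)) =
    (0 : ℂ) • matUnit 1 1 := by
  ext a b
  fin_cases a <;> fin_cases b <;>
    simp [matUnit, Matrix.single, Matrix.mul_apply, Fin.sum_univ_three] <;> ring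

lemma aux_e02 (γ : ℝ) : (γ : ℂ) •
    (matUnit 0 2 * matUnit 0 2 * matUnit 2 0 -
      (1 / 2 : ℂ) • (matUnit 2 2 * matUnit 0 2 + matUnit 0 2 * matUnit 2 2)) =
    (-(γ:ℂ)/2 : ℂ) • matUnit 0 2 := by
  ext a b
  fin_cases a <;> fin_cases b <;>
    simp [matUnit, Matrix.single, Matrix.mul_apply, Fin.sum_univ_three] <;> ring

lemma aux_e20 (γ : ℝ) : (γ : ℂ) •
    (matUnit 0 2 * matUnit 2 0 * matUnit 2 0 -
      (1 / 2 : ℂ) • (matUnit 2 2 * matUnit 2 0 + matUnit 2 0 * matUnit 2 2)) =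
    (-(γ:ℂ)/2 : ℂ) • matUnit 2 0 := by
  ext a b
  fin_cases a <;> fin_cases b <;>
    simp [matUnit, Matrix.single, Matrix.mul_apply, Fin.sum_univ_three] <;> ring

lemma aux_e12 (γ : ℝ) : (γ : ℂ) •
    (matUnit 0 2 * matUnit 1 2 * matUnit 2 0 -
      (1 / 2 : ℂ) • (matUnit 2 2 * matUnit 1 2 + matUnit 1 2 * matUnit 2 2)) =
    (-(γ:ℂ)/2 : ℂ) • matUnit 1 2 := by
  ext a b
  fin_cases a <;> fin_cases b <;>
    simp [matUnit, Matrix.single, Matrix.mul_apply, Fin.sum_univ_three] <;> ring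

lemma aux_e21 (γ : ℝ) : (γ : ℂ) •
    (matUnit 0 2 * matUnit 2 1 * matUnit 2 0 -
      (1 / 2 : ℂ) • (matUnit 2 2 * matUnit 2 1 + matUnit 2 1 * matUnit 2 2)) =
    (-(γ:ℂ)/2 : ℂ) • matUnit 2 1 := by
  ext a b
  fin_cases a <;> fin_cases b <;>
    simp [matUnit, Matrix.single, Matrix.mul_apply, Fin.sum_univ_three] <;> ring

lemma aux_ew (γ : ℝ) : (γ : ℂ) •
    (matUnit 0 2 * (matUnit 2 2 - matUnit 0 0) * matUnit 2 0 -
      (1 / 2 : ℂ) • (matUnit 2 2 * (matUnit 2 2 - matUnit 0 0) +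
        (matUnit 2 2 - matUnit 0 0) * matUnit 2 2)) =
    (-(γ:ℂ)) • (matUnit 2 2 - matUnit 0 0) := by
  ext a b
  fin_cases a <;> fin_cases b <;>
    simp [matUnit, Matrix.single, Matrix.mul_apply, Fin.sum_univ_three] <;> ring

set_option maxHeartbeats 1000000 in
/-- explicit entries of `exp(t L_0) ρ` for the GKSL generator
`L_0(ρ) = γ (E_{02} ρ E_{20} - ½(E_{22} ρ + ρ E_{22}))` of the three-level model. -/
theorem stmt13 (γ : ℝ)
    (L₀ : Matrix (Fin 3) (Fin 3) ℂ →L[ℂ] Matrix (Fin 3) (Fin 3) ℂ)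
    (hL₀ : ∀ ρ, L₀ ρ = (γ : ℂ) •
      (matUnit 0 2 * ρ * matUnit 2 0 -
        (1 / 2 : ℂ) • (matUnit 2 2 * ρ + ρ * matUnit 2 2))) :
    ∀ (t : ℝ) (ρ : Matrix (Fin 3) (Fin 3) ℂ),
      (NormedSpace.exp (t • L₀)) ρ 0 0 =
          ρ 0 0 + (1 - (Real.exp (-(γ * t)) : ℂ)) * ρ 2 2 ∧
      (NormedSpace.exp (t • L₀)) ρ 2 2 = (Real.exp (-(γ * t)) : ℂ) * ρ 2 2 ∧
      (NormedSpace.exp (t • L₀)) ρ 0 2 = (Real.exp (-(γ * t) / 2) : ℂ) * ρ 0 2 ∧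
      (NormedSpace.exp (t • L₀)) ρ 2 0 = (Real.exp (-(γ * t) / 2) : ℂ) * ρ 2 0 ∧
      (NormedSpace.exp (t • L₀)) ρ 1 2 = (Real.exp (-(γ * t) / 2) : ℂ) * ρ 1 2 ∧
      (NormedSpace.exp (t • L₀)) ρ 2 1 = (Real.exp (-(γ * t) / 2) : ℂ) * ρ 2 1 ∧
      (NormedSpace.exp (t • L₀)) ρ 0 1 = ρ 0 1 ∧
      (NormedSpace.exp (t • L₀)) ρ 1 0 = ρ 1 0 ∧
      (NormedSpace.exp (t • L₀)) ρ 1 1 = ρ 1 1 := by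
  intro t ρ
  -- eigenvector computations for L₀ (see top-level lemmas)
  have e00 : L₀ (matUnit 0 0) = (0 : ℂ) • matUnit 0 0 := by
    rw [hL₀]; exact aux_e00 γ
  have e01 : L₀ (matUnit 0 1) = (0 : ℂ) • matUnit 0 1 := by
    rw [hL₀]; exact aux_e01 γ
  have e10 : L₀ (matUnit 1 0) = (0 : ℂ) • matUnit 1 0 := by
    rw [hL₀]; exact aux_e10 γ
  have e11 : L₀ (matUnit 1 1) = (0 : ℂ) • matUnit 1 1 := by
    rw [hL₀]; exact aux_e11 γ
  have e02 : L₀ (matUnit 0 2) = (-(γ:ℂ)/2 : ℂ) • matUnit 0 2 := by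
    rw [hL₀]; exact aux_e02 γ
  have e20 : L₀ (matUnit 2 0) = (-(γ:ℂ)/2 : ℂ) • matUnit 2 0 := by
    rw [hL₀]; exact aux_e20 γ
  have e12 : L₀ (matUnit 1 2) = (-(γ:ℂ)/2 : ℂ) • matUnit 1 2 := by
    rw [hL₀]; exact aux_e12 γ
  have e21 : L₀ (matUnit 2 1) = (-(γ:ℂ)/2 : ℂ) • matUnit 2 1 := by
    rw [hL₀]; exact aux_e21 γ
  have hw : L₀ (matUnit 2 2 - matUnit 0 0) = (-(γ:ℂ)) • (matUnit 2 2 - matUnit 0 0) := by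
    rw [hL₀]; exact aux_ew γ
  -- exp of t•L₀ on eigenvectors
  have key : ∀ (c : ℂ) (v : Matrix (Fin 3) (Fin 3) ℂ), L₀ v = c • v →
      (NormedSpace.exp (t • L₀)) v = Complex.exp ((t : ℂ) * c) • v := by
    intro c v hv
    have : (t • L₀) v = ((t : ℂ) * c) • v := by
      rw [ContinuousLinearMap.smul_apply, hv, ← smul_assoc]
      norm_num [Complex.real_smul]
    rw [show NormedSpace.exp (t • L₀) v = _ from exp_eigen (t • L₀) ((t : ℂ) * c) v this,
      Complex.exp_eq_exp_ℂ]
  -- decomposition of ρ into eigenvectors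
  have hρ : ρ = (ρ 0 0 + ρ 2 2) • matUnit 0 0 + ρ 0 1 • matUnit 0 1 +
      ρ 1 0 • matUnit 1 0 + ρ 1 1 • matUnit 1 1 +
      ρ 2 2 • (matUnit 2 2 - matUnit 0 0) +
      ρ 0 2 • matUnit 0 2 + ρ 2 0 • matUnit 2 0 +
      ρ 1 2 • matUnit 1 2 + ρ 2 1 • matUnit 2 1 := by
    ext i j
    fin_cases i <;> fin_cases j <;>
      simp [matUnit, Matrix.single] <;> ring
  have hexp : (NormedSpace.exp (t • L₀)) ρ =
      (ρ 0 0 + ρ 2 2) • matUnit 0 0 + ρ 0 1 • matUnit 0 1 +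
      ρ 1 0 • matUnit 1 0 + ρ 1 1 • matUnit 1 1 +
      (Complex.exp ((t : ℂ) * (-(γ:ℂ))) * ρ 2 2) • (matUnit 2 2 - matUnit 0 0) +
      (Complex.exp ((t : ℂ) * (-(γ:ℂ)/2)) * ρ 0 2) • matUnit 0 2 +
      (Complex.exp ((t : ℂ) * (-(γ:ℂ)/2)) * ρ 2 0) • matUnit 2 0 +
      (Complex.exp ((t : ℂ) * (-(γ:ℂ)/2)) * ρ 1 2) • matUnit 1 2 +
      (Complex.exp ((t : ℂ) * (-(γ:ℂ)/2)) * ρ 2 1) • matUnit 2 1 := by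
    conv_lhs => rw [hρ]
    simp only [map_add, map_smul]
    rw [key 0 _ e00, key 0 _ e01, key 0 _ e10, key 0 _ e11, key _ _ hw,
      key _ _ e02, key _ _ e20, key _ _ e12, key _ _ e21]
    simp [smul_smul, mul_comm]
  have hexpval : (Complex.exp ((t : ℂ) * (-(γ:ℂ))) : ℂ) = (Real.exp (-(γ * t)) : ℂ) := by
    have h : ((t : ℂ) * (-(γ:ℂ))) = (((-(γ * t) : ℝ)) : ℂ) := by push_cast; ring
    rw [h, Complex.ofReal_exp]
  have hexpval2 : (Complex.exp ((t : ℂ) * (-(γ:ℂ)/2)) : ℂ) = (Real.exp (-(γ * t) / 2) : ℂ) := by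
    have h : ((t : ℂ) * (-(γ:ℂ)/2)) = (((-(γ * t) / 2 : ℝ)) : ℂ) := by push_cast; ring
    rw [h, Complex.ofReal_exp]
  rw [hexpval, hexpval2] at hexp
  rw [hexp]
  refine ⟨?_, ?_, ?_, ?_, ?_, ?_, ?_, ?_, ?_⟩ <;>
  · simp only [Matrix.add_apply, Matrix.sub_apply, Matrix.smul_apply, matUnit,
      Matrix.single, Matrix.of_apply, smul_eq_mul]
    norm_num [Fin.ext_iff]
    try ring
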